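/- arXiv:1908.07077 — 3 statements merged into one kernel-verified Lean document; each statement's English description precedes it below -/
import Mathlib

section
/- Let X be a reflexive real Banach space, let M : X → 2^{X*} be monotone, let γ > 0, and let K : X → X* be β-Lipschitzian and α-strongly monotone for some α, β > 0, such that ran K ⊂ ran(K + γM) and K + γM is injective. Then the warped resolvent J^K_{γM} = (K + γM)^{-1} ∘ K is (β/α)-Lipschitzian: ‖J^K_{γM}x − J^K_{γM}y‖ ≤ (β/α)‖x − y‖ for all x, y ∈ X. -/
open NormedSpace

/-- Proposition 3.11(v): if `M` is monotone and `K` is `β`-Lipschitzian and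
`α`-strongly monotone, then the warped resolvent `J^K_{γM}` is `(β/α)`-Lipschitzian. -/
theorem stmt_16
    {X : Type*} [NormedAddCommGroup X] [NormedSpace ℝ X] [CompleteSpace X]
    (hrefl : Function.Surjective ⇑(inclusionInDoubleDual ℝ X))
    (M : X → Set (StrongDual ℝ X))
    (hMmono : ∀ x y u v, u ∈ M x → v ∈ M y → (0:ℝ) ≤ (u - v) (x - y))
    (γ : ℝ) (hγ : 0 < γ)
    (K : X → StrongDual ℝ X) (α β : ℝ) (hα : 0 < α) (hβ : 0 < β)
    (hKlip : ∀ x y, ‖K x - K y‖ ≤ β * ‖x - y‖)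
    (hKsm : ∀ x y, α * ‖x - y‖ ^ 2 ≤ (K x - K y) (x - y))
    -- ran K ⊆ ran (K + γM)
    (hran : ∀ x, ∃ p, ∃ u ∈ M p, K x = K p + γ • u)
    -- K + γM is injective
    (hinj : ∀ p q, (∃ w, (∃ u ∈ M p, w = K p + γ • u) ∧ ∃ u ∈ M q, w = K q + γ • u) →
      p = q)
    -- J is the warped resolvent J^K_{γM} = (K + γM)⁻¹ ∘ K
    (Jr : X → X)
    (hJ : ∀ x, γ⁻¹ • (K x - K (Jr x)) ∈ M (Jr x)) :
    ∀ x y : X, ‖Jr x - Jr y‖ ≤ (β / α) * ‖x - y‖ := by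
  intro x y
  set p := Jr x
  set q := Jr y
  have hmono := hMmono p q _ _ (hJ x) (hJ y)
  -- expand
  have h1 : (0:ℝ) ≤ γ⁻¹ * (((K x - K y) - (K p - K q)) (p - q)) := by
    have : ((γ⁻¹ • (K x - K p)) - (γ⁻¹ • (K y - K q))) (p - q)
        = γ⁻¹ * (((K x - K y) - (K p - K q)) (p - q)) := by
      simp [ContinuousLinearMap.sub_apply, ContinuousLinearMap.smul_apply]
      ring
    linarith [hmono, this ▸ hmono]
  have h2 : ((K p - K q) (p - q)) ≤ (K x - K y) (p - q) := by
    have hγ' : (0:ℝ) < γ⁻¹ := by positivity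
    have hD : (0:ℝ) ≤ (K x - K y - (K p - K q)) (p - q) :=
      nonneg_of_mul_nonneg_right h1 hγ'
    simpa [ContinuousLinearMap.sub_apply, sub_nonneg] using hD
  have h3 : (K x - K y) (p - q) ≤ ‖K x - K y‖ * ‖p - q‖ :=
    le_trans (le_abs_self _) (by simpa [Real.norm_eq_abs] using (K x - K y).le_opNorm (p - q))
  have h4 : α * ‖p - q‖ ^ 2 ≤ β * ‖x - y‖ * ‖p - q‖ := by
    calc α * ‖p - q‖ ^ 2 ≤ (K p - K q) (p - q) := hKsm p q
      _ ≤ (K x - K y) (p - q) := h2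
      _ ≤ ‖K x - K y‖ * ‖p - q‖ := h3
      _ ≤ β * ‖x - y‖ * ‖p - q‖ := by
          exact mul_le_mul_of_nonneg_right (hKlip x y) (norm_nonneg _)
  rcases eq_or_lt_of_le (norm_nonneg (p - q)) with h0 | h0
  · rw [← h0]; positivity
  · rw [div_mul_eq_mul_div, le_div_iff₀ hα]
    nlinarith [h4, h0]
end

section
/- Let X be a real Hilbert space, let M : X → 2^X be maximally monotone, and let K : X → X be averaged with constant α ∈ (0,1). Suppose K + M is 1-strongly monotone, i.e., ⟪x−y, u−v⟫ ≥ ‖x−y‖² for all (x,u),(y,v) in the graph of K + M. Then K + M is surjective with single-valued inverse, and the warped resolvent J^K_M = (K + M)^{-1} ∘ K is averaged with constant 1/(2−α). -/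
open RealInnerProductSpace Filter Topology

lemma aux_small (m C D : ℝ) (hD : 0 ≤ D)
    (h : ∀ t : ℝ, 0 < t → t ≤ 1/2 → m ≤ C + t*D) : m ≤ C := by
  refine le_of_forall_pos_le_add fun ε hε => ?_
  have hD1 : (0:ℝ) < D + 1 := by linarith
  have ht0 : 0 < min (1/2) (ε/(D+1)) := lt_min (by norm_num) (by positivity)
  have h4 := h _ ht0 (min_le_left _ _)
  have h5 : min (1/2) (ε/(D+1)) * D ≤ (ε/(D+1))*D :=
    mul_le_mul_of_nonneg_right (min_le_right _ _) hD
  have h6 : (ε/(D+1))*D ≤ ε := by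
    rw [div_mul_eq_mul_div, div_le_iff₀ hD1]; nlinarith
  linarith

lemma minty_aux {X : Type*} [NormedAddCommGroup X] [InnerProductSpace ℝ X]
    [CompleteSpace X]
    (A : X → Set X) (hne : ∃ y v, v ∈ A y)
    (hmono : ∀ x y u v, u ∈ A x → v ∈ A y → (0:ℝ) ≤ ⟪x - y, u - v⟫)
    (hmax : ∀ x u, (∀ y v, v ∈ A y → (0:ℝ) ≤ ⟪x - y, u - v⟫) → u ∈ A x) :
    ∃ p, -p ∈ A p := by
  obtain ⟨y₀, v₀, hy₀⟩ := hne
  set T : Set ℝ := {t | ∃ x u : X, ∀ y v, v ∈ A y →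
      ⟪x, v⟫ + ⟪y, u⟫ - ⟪y, v⟫ + (‖x‖^2/2 + ‖u‖^2/2) ≤ t} with hT
  have hmono' : ∀ y v y' v', v ∈ A y → v' ∈ A y' →
      ⟪y, v'⟫ + ⟪y', v⟫ ≤ ⟪y, v⟫ + ⟪y', v'⟫ := by
    intro y v y' v' hv hv'
    have h := hmono y y' v v' hv hv'
    rw [inner_sub_left, inner_sub_right, inner_sub_right] at h
    have h1 : ⟪y', v⟫ = ⟪y, v⟫ - (⟪y, v⟫ - ⟪y', v⟫) := by ring
    linarith [h]
  have hTne : T.Nonempty := by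
    refine ⟨⟪y₀, v₀⟫ + (‖y₀‖^2/2 + ‖v₀‖^2/2), y₀, v₀, ?_⟩
    intro y v hv
    have := hmono' y v y₀ v₀ hv hy₀
    linarith
  have hTbdd : BddBelow T := by
    refine ⟨-⟪y₀, v₀⟫ - ‖y₀‖^2/2 - ‖v₀‖^2/2, ?_⟩
    rintro t ⟨x, u, hxu⟩
    have h1 := hxu y₀ v₀ hy₀
    have h2 : -(‖x‖ * ‖v₀‖) ≤ ⟪x, v₀⟫ := by
      have := real_inner_le_norm (-x) v₀
      rw [inner_neg_left, norm_neg] at this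
      linarith
    have h3 : -(‖y₀‖ * ‖u‖) ≤ ⟪y₀, u⟫ := by
      have := real_inner_le_norm y₀ (-u)
      rw [inner_neg_right, norm_neg] at this
      linarith
    nlinarith [sq_nonneg (‖x‖ - ‖v₀‖), sq_nonneg (‖u‖ - ‖y₀‖)]
  set m : ℝ := sInf T with hm
  have hmem : ∀ t ∈ T, m ≤ t := fun t ht => csInf_le hTbdd ht
  have hseq : ∀ n : ℕ, ∃ (x u : X) (t : ℝ),
      (∀ y v, v ∈ A y → ⟪x, v⟫ + ⟪y, u⟫ - ⟪y, v⟫ + (‖x‖^2/2 + ‖u‖^2/2) ≤ t)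
      ∧ t < m + 1/(n+1) := by
    intro n
    obtain ⟨t, ht, hlt⟩ := Real.lt_sInf_add_pos hTne
      (by positivity : (0:ℝ) < 1/(n+1))
    obtain ⟨x, u, hxu⟩ := ht
    exact ⟨x, u, t, hxu, hlt⟩
  choose xs us ts hg hts using hseq
  have hts_ge : ∀ n, m ≤ ts n := fun n => hmem _ ⟨xs n, us n, hg n⟩
  -- midpoint / strong convexity estimate
  have hmid : ∀ n k : ℕ, ‖xs n - xs k‖^2 + ‖us n - us k‖^2 ≤ 4*(ts n + ts k) - 8*m := by
    intro n k
    have hhalf : ∀ a b : X, ‖(1/2:ℝ) • (a + b)‖^2 = (‖a‖^2 + ‖b‖^2)/2 - ‖a - b‖^2/4 := by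
      intro a b
      have h1 : ‖(1/2:ℝ) • (a + b)‖^2 = (1/4) * ‖a + b‖^2 := by
        rw [norm_smul, Real.norm_eq_abs]
        rw [abs_of_pos (by norm_num : (0:ℝ) < 1/2)]
        ring
      have h2 := norm_add_sq_real a b
      have h3 := norm_sub_sq_real a b
      rw [h1, h2]; linarith
    have hmemT : ts n/2 + ts k/2 - (‖xs n - xs k‖^2 + ‖us n - us k‖^2)/8 ∈ T := by
      refine ⟨(1/2:ℝ) • (xs n + xs k), (1/2:ℝ) • (us n + us k), ?_⟩
      intro y v hv
      have h1 := hg n y v hv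
      have h2 := hg k y v hv
      have e1 : ⟪(1/2:ℝ) • (xs n + xs k), v⟫ = (⟪xs n, v⟫ + ⟪xs k, v⟫)/2 := by
        rw [real_inner_smul_left, inner_add_left]; ring
      have e2 : ⟪y, (1/2:ℝ) • (us n + us k)⟫ = (⟪y, us n⟫ + ⟪y, us k⟫)/2 := by
        rw [real_inner_smul_right, inner_add_right]; ring
      rw [e1, e2, hhalf, hhalf]
      linarith
    have := hmem _ hmemT
    linarith
  -- Cauchy sequences
  have hbound : ∀ n k N : ℕ, N ≤ n → N ≤ k →
      ‖xs n - xs k‖^2 + ‖us n - us k‖^2 ≤ 8/(N+1) := by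
    intro n k N hn hk
    have h1 := hmid n k
    have h2 := hts n
    have h3 := hts k
    have hfn : 1/((n:ℝ)+1) ≤ 1/((N:ℝ)+1) := by
      apply one_div_le_one_div_of_le (by positivity)
      exact_mod_cast Nat.succ_le_succ hn
    have hfk : 1/((k:ℝ)+1) ≤ 1/((N:ℝ)+1) := by
      apply one_div_le_one_div_of_le (by positivity)
      exact_mod_cast Nat.succ_le_succ hk
    have hmn := hts_ge n
    have hmk := hts_ge k
    have : (4:ℝ)*(ts n + ts k) - 8*m ≤ 4*(1/((n:ℝ)+1)) + 4*(1/((k:ℝ)+1)) := by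
      nlinarith
    calc ‖xs n - xs k‖^2 + ‖us n - us k‖^2 ≤ 4*(ts n + ts k) - 8*m := h1
      _ ≤ 4*(1/((n:ℝ)+1)) + 4*(1/((k:ℝ)+1)) := this
      _ ≤ 8/((N:ℝ)+1) := by
          have h8 : (8:ℝ)/((N:ℝ)+1) = 4*(1/((N:ℝ)+1)) + 4*(1/((N:ℝ)+1)) := by ring
          rw [h8]; linarith
  have hb0 : Tendsto (fun N : ℕ => Real.sqrt (8/(N+1))) atTop (𝓝 0) := by
    have h8 : Tendsto (fun N : ℕ => (8:ℝ)/(N+1)) atTop (𝓝 0) := by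
      have := tendsto_one_div_add_atTop_nhds_zero_nat.const_mul (8:ℝ)
      simpa [div_eq_mul_inv, mul_comm] using this
    have hs : Tendsto Real.sqrt (𝓝 0) (𝓝 0) := by
      simpa using (Real.continuous_sqrt.tendsto 0)
    exact hs.comp h8
  have hdistb : ∀ (s : ℕ → X), (∀ n k N : ℕ, N ≤ n → N ≤ k → ‖s n - s k‖^2 ≤ 8/(N+1)) →
      CauchySeq s := by
    intro s hs
    refine cauchySeq_of_le_tendsto_0 (fun N : ℕ => Real.sqrt (8/((N:ℝ)+1))) ?_ hb0
    intro n k N hn hk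
    rw [dist_eq_norm]
    have h := hs n k N hn hk
    calc ‖s n - s k‖ = Real.sqrt (‖s n - s k‖^2) := by
          rw [Real.sqrt_sq (norm_nonneg _)]
      _ ≤ Real.sqrt (8/(N+1)) := Real.sqrt_le_sqrt h
  have hcx : CauchySeq xs := by
    apply hdistb
    intro n k N hn hk
    have := hbound n k N hn hk
    nlinarith [sq_nonneg ‖us n - us k‖]
  have hcu : CauchySeq us := by
    apply hdistb
    intro n k N hn hk
    have := hbound n k N hn hk
    nlinarith [sq_nonneg ‖xs n - xs k‖]
  obtain ⟨xb, hxb⟩ := cauchySeq_tendsto_of_complete hcx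
  obtain ⟨ub, hub⟩ := cauchySeq_tendsto_of_complete hcu
  have hts_to : Tendsto ts atTop (𝓝 m) := by
    apply tendsto_of_tendsto_of_tendsto_of_le_of_le (g := fun _ => m)
      (h := fun n : ℕ => m + 1/(n+1)) tendsto_const_nhds ?_ hts_ge (fun n => (hts n).le)
    have := tendsto_one_div_add_atTop_nhds_zero_nat.const_add m
    simpa using this
  have hEbar : ∀ y v, v ∈ A y →
      ⟪xb, v⟫ + ⟪y, ub⟫ - ⟪y, v⟫ + (‖xb‖^2/2 + ‖ub‖^2/2) ≤ m := by
    intro y v hv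
    refine le_of_tendsto_of_tendsto' ?_ hts_to (fun n => hg n y v hv)
    exact (((hxb.inner tendsto_const_nhds).add (tendsto_const_nhds.inner hub)).sub
      tendsto_const_nhds).add (((hxb.norm.pow 2).div_const 2).add
        ((hub.norm.pow 2).div_const 2))
  -- variational inequality at the minimizer
  have hvar : ∀ y v, v ∈ A y →
      m ≤ (‖xb‖^2/2 + ‖ub‖^2/2) + ⟪y, v⟫ + (⟪xb, y - xb⟫ + ⟪ub, v - ub⟫) := by
    intro y v hv
    refine aux_small m _ ((‖y - xb‖^2 + ‖v - ub‖^2)/2) (by positivity) ?_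
    intro t ht0 ht1
    have hst : m ≤ (1-t)*(m - (‖xb‖^2/2 + ‖ub‖^2/2)) + t*⟪y, v⟫
        + (‖xb + t•(y - xb)‖^2/2 + ‖ub + t•(v - ub)‖^2/2) := by
      apply hmem
      refine ⟨xb + t•(y - xb), ub + t•(v - ub), ?_⟩
      intro y' v' hv'
      have hf1 : ⟪xb, v'⟫ + ⟪y', ub⟫ - ⟪y', v'⟫ ≤ m - (‖xb‖^2/2 + ‖ub‖^2/2) := by
        have := hEbar y' v' hv'; linarith
      have hf2 : ⟪y, v'⟫ + ⟪y', v⟫ - ⟪y', v'⟫ ≤ ⟪y, v⟫ := by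
        have := hmono' y v y' v' hv hv'; linarith
      have e1 : ⟪xb + t•(y - xb), v'⟫ = (1-t)*⟪xb, v'⟫ + t*⟪y, v'⟫ := by
        rw [inner_add_left, real_inner_smul_left, inner_sub_left]; ring
      have e2 : ⟪y', ub + t•(v - ub)⟫ = (1-t)*⟪y', ub⟫ + t*⟪y', v⟫ := by
        rw [inner_add_right, real_inner_smul_right, inner_sub_right]; ring
      rw [e1, e2]
      have h1t : 0 ≤ 1 - t := by linarith
      nlinarith [mul_le_mul_of_nonneg_left hf1 h1t, mul_le_mul_of_nonneg_left hf2 ht0.le]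
    have e3 : ∀ (a d : X), ‖a + t•d‖^2 = ‖a‖^2 + 2*t*⟪a, d⟫ + t^2*‖d‖^2 := by
      intro a d
      rw [norm_add_sq_real, real_inner_smul_right, norm_smul, Real.norm_eq_abs,
        abs_of_pos ht0, mul_pow]
      ring
    rw [e3, e3] at hst
    nlinarith [ht0, hst]
  -- conclusion
  set p : X := (1/2:ℝ) • (xb - ub) with hp
  refine ⟨p, hmax _ _ ?_⟩
  intro y v hv
  have h1 := hEbar y v hv
  have h2 := hvar y v hv
  have hnn : (0:ℝ) ≤ ‖xb + ub‖^2 := sq_nonneg _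
  have hexp : ‖xb + ub‖^2 = ‖xb‖^2 + 2*⟪xb, ub⟫ + ‖ub‖^2 := norm_add_sq_real _ _
  have e0 : ⟪p - y, -p - v⟫ = ⟪y, v⟫ + ⟪y, p⟫ - ⟪p, v⟫ - ⟪p, p⟫ := by
    rw [inner_sub_left, inner_sub_right, inner_sub_right, inner_neg_right, inner_neg_right]
    ring
  have e1 : ⟪p, p⟫ = (‖xb‖^2 - 2*⟪xb, ub⟫ + ‖ub‖^2)/4 := by
    rw [hp, real_inner_smul_left, real_inner_smul_right, inner_sub_left,
      inner_sub_right, inner_sub_right, real_inner_self_eq_norm_sq,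
      real_inner_self_eq_norm_sq, real_inner_comm ub xb]
    ring
  have e2 : ⟪p, v⟫ = (⟪xb, v⟫ - ⟪ub, v⟫)/2 := by
    rw [hp, real_inner_smul_left, inner_sub_left]; ring
  have e3 : ⟪y, p⟫ = (⟪y, xb⟫ - ⟪y, ub⟫)/2 := by
    rw [hp, real_inner_smul_right, inner_sub_right]; ring
  have e4 : ⟪xb, y - xb⟫ = ⟪y, xb⟫ - ‖xb‖^2 := by
    rw [inner_sub_right, real_inner_self_eq_norm_sq, real_inner_comm]
  have e5 : ⟪ub, v - ub⟫ = ⟪ub, v⟫ - ‖ub‖^2 := by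
    rw [inner_sub_right, real_inner_self_eq_norm_sq]
  have e6 : ⟪y, ub⟫ = ⟪ub, y⟫ := real_inner_comm _ _
  rw [e0, e1, e2, e3]
  rw [e4, e5] at h2
  linarith

/-- Proposition 3.12: if `K` is `α`-averaged and `K + M` is `1`-strongly monotone,
then `K + M` is surjective with single-valued inverse and the warped resolvent
`J^K_M = (K + M)⁻¹ ∘ K` is `1/(2−α)`-averaged. A map `T` is `c`-averaged if
`Id + (1/c)(T − Id)` is nonexpansive; note `1/(1/(2−α)) = 2 − α`. -/
theorem stmt_18
    {X : Type*} [NormedAddCommGroup X] [InnerProductSpace ℝ X] [CompleteSpace X]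
    (M : X → Set X)
    (hMmono : ∀ x y u v, u ∈ M x → v ∈ M y → (0:ℝ) ≤ ⟪x - y, u - v⟫)
    (hMmax : ∀ A : X → Set X,
      (∀ x y u v, u ∈ A x → v ∈ A y → (0:ℝ) ≤ ⟪x - y, u - v⟫) →
      (∀ x, M x ⊆ A x) → ∀ x, A x ⊆ M x)
    (K : X → X) (α : ℝ) (hα : α ∈ Set.Ioo (0:ℝ) 1)
    -- K is α-averaged
    (hKavg : ∀ x y, ‖(x + (1 / α) • (K x - x)) - (y + (1 / α) • (K y - y))‖ ≤ ‖x - y‖)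
    -- K + M is 1-strongly monotone
    (hsm : ∀ x y u v, u ∈ M x → v ∈ M y →
      ‖x - y‖ ^ 2 ≤ ⟪x - y, (K x + u) - (K y + v)⟫) :
    -- K + M is surjective with single-valued inverse
    (∀ w : X, ∃! p, ∃ u ∈ M p, w = K p + u) ∧
    -- and the warped resolvent J^K_M is 1/(2−α)-averaged
    ∀ Jr : X → X, (∀ x, K x - K (Jr x) ∈ M (Jr x)) →
      ∀ x y, ‖(x + (2 - α) • (Jr x - x)) - (y + (2 - α) • (Jr y - y))‖ ≤ ‖x - y‖ := by
  obtain ⟨hα0, hα1⟩ := hα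
  set N : X → X := fun x => x + (1/α) • (K x - x) with hNdef
  have hNle : ∀ x y, ‖N x - N y‖ ≤ ‖x - y‖ := hKavg
  have hKN : ∀ x, K x - x = α • (N x - x) := by
    intro x
    show K x - x = α • (x + (1/α) • (K x - x) - x)
    rw [add_sub_cancel_left, smul_smul, mul_one_div, div_self hα0.ne', one_smul]
  -- Id - K is monotone
  have hIdK : ∀ a b : X, (0:ℝ) ≤ ⟪a - b, (a - K a) - (b - K b)⟫ := by
    intro a b
    have ha := hKN a
    have hb := hKN b
    have h1 : (a - K a) - (b - K b) = α • ((a - b) - (N a - N b)) := by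
      have e : (a - K a) - (b - K b) = (K b - b) - (K a - a) := by abel
      rw [e, ha, hb, ← smul_sub]
      congr 1
      abel
    rw [h1, real_inner_smul_right]
    have h2 : ⟪a - b, (a - b) - (N a - N b)⟫ = ‖a-b‖^2 - ⟪a - b, N a - N b⟫ := by
      rw [inner_sub_right, real_inner_self_eq_norm_sq]
    have h3 : ⟪a - b, N a - N b⟫ ≤ ‖a-b‖ * ‖N a - N b‖ := real_inner_le_norm _ _
    have h5 : ‖a-b‖ * ‖N a - N b‖ ≤ ‖a-b‖ * ‖a-b‖ :=
      mul_le_mul_of_nonneg_left (hNle a b) (norm_nonneg _)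
    have h6 : (0:ℝ) ≤ ⟪a - b, (a - b) - (N a - N b)⟫ := by
      rw [h2]; nlinarith [sq_nonneg ‖a-b‖]
    exact mul_nonneg hα0.le h6
  -- graph of M is nonempty
  have hgne : ∃ y v, v ∈ M y := by
    by_contra h
    push_neg at h
    have hsub : ∀ x, M x ⊆ (fun z => {u : X | z = 0 ∧ u = 0}) x := by
      intro x u hu
      exact absurd hu (h x u)
    have hmono2 : ∀ x y u v, u ∈ (fun z => {u : X | z = 0 ∧ u = 0}) x →
        v ∈ (fun z => {u : X | z = 0 ∧ u = 0}) y → (0:ℝ) ≤ ⟪x - y, u - v⟫ := by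
      rintro x y u v ⟨rfl, rfl⟩ ⟨rfl, rfl⟩
      simp
    have := hMmax _ hmono2 hsub 0 ⟨rfl, rfl⟩
    exact h 0 0 this
  constructor
  · -- surjectivity with single-valued inverse
    intro w
    set A : X → Set X := fun p => (fun mm => K p + mm - p - w) '' M p with hAdef
    have hAmono : ∀ x y u v, u ∈ A x → v ∈ A y → (0:ℝ) ≤ ⟪x - y, u - v⟫ := by
      rintro x y u v ⟨mx, hmx, rfl⟩ ⟨my, hmy, rfl⟩
      have h1 := hsm x y mx my hmx hmy
      have e : (K x + mx - x - w) - (K y + my - y - w)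
          = ((K x + mx) - (K y + my)) - (x - y) := by abel
      rw [e, inner_sub_right, real_inner_self_eq_norm_sq]
      linarith
    have hAmax : ∀ x u, (∀ y v, v ∈ A y → (0:ℝ) ≤ ⟪x - y, u - v⟫) → u ∈ A x := by
      intro x u hu
      set mm : X := u - K x + x + w with hmm
      have hrel : ∀ b d, d ∈ M b → (0:ℝ) ≤ ⟪x - b, mm - d⟫ := by
        intro b d hd
        have h1 := hu b (K b + d - b - w) ⟨d, hd, rfl⟩
        have h2 := hIdK x b
        have e : mm - d = (u - (K b + d - b - w)) + ((x - K x) - (b - K b)) := by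
          rw [hmm]; abel
        rw [e, inner_add_right]
        linarith
      have hmmM : mm ∈ M x := by
        set A' : X → Set X := fun z => M z ∪ {uu : X | z = x ∧ uu = mm} with hA'
        have hA'mono : ∀ a b c d, c ∈ A' a → d ∈ A' b → (0:ℝ) ≤ ⟪a - b, c - d⟫ := by
          intro a b c d hc hd
          rcases hc with hc | ⟨hax, hcm⟩
          · rcases hd with hd | ⟨hbx, hdm⟩
            · exact hMmono a b c d hc hd
            · rw [hbx, hdm]
              have h9 := hrel a c hc
              have e : ⟪a - x, c - mm⟫ = ⟪x - a, mm - c⟫ := by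
                rw [show a - x = -(x - a) by abel, show c - mm = -(mm - c) by abel,
                  inner_neg_neg]
              rw [e]; exact h9
          · rw [hax, hcm]
            rcases hd with hd | ⟨hbx, hdm⟩
            · exact hrel b d hd
            · rw [hbx, hdm]; simp
        have hA'sub : ∀ z, M z ⊆ A' z := fun z => Set.subset_union_left
        have := hMmax A' hA'mono hA'sub x (Or.inr ⟨rfl, rfl⟩)
        exact this
      refine ⟨mm, hmmM, ?_⟩
      show K x + mm - x - w = u
      rw [hmm]; abel
    have hAne : ∃ y v, v ∈ A y := by
      obtain ⟨y₀, v₀, hv₀⟩ := hgne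
      exact ⟨y₀, K y₀ + v₀ - y₀ - w, v₀, hv₀, rfl⟩
    obtain ⟨p, hp⟩ := minty_aux A hAne hAmono hAmax
    obtain ⟨mp, hmp, hmpe⟩ := hp
    have hpe : w = K p + mp := by
      have h1 : (K p + mp - w) - p = 0 - p := by
        rw [zero_sub, ← hmpe]; abel
      have h2 : K p + mp - w = 0 := by
        exact sub_left_inj.mp h1
      have := sub_eq_zero.mp h2
      exact this.symm
    refine ⟨p, ⟨mp, hmp, hpe⟩, ?_⟩
    rintro q ⟨mq, hmq, hqe⟩
    have h1 := hsm q p mq mp hmq hmp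
    rw [← hqe, ← hpe, sub_self, inner_zero_right] at h1
    have h2 : ‖q - p‖ = 0 := by nlinarith [norm_nonneg (q - p), sq_nonneg ‖q - p‖]
    have := norm_eq_zero.mp h2
    exact sub_eq_zero.mp this
  · -- averagedness of the warped resolvent
    intro Jr hJr x y
    obtain ⟨p, hpd⟩ : ∃ p, p = Jr x := ⟨_, rfl⟩
    obtain ⟨q, hqd⟩ : ∃ q, q = Jr y := ⟨_, rfl⟩
    rw [← hpd, ← hqd]
    have hpx : K x - K p ∈ M p := by rw [hpd]; exact hJr x
    have hqy : K y - K q ∈ M q := by rw [hqd]; exact hJr y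
    have h0 := hsm p q (K x - K p) (K y - K q) hpx hqy
    have e0 : (K p + (K x - K p)) - (K q + (K y - K q)) = K x - K y := by abel
    rw [e0] at h0
    have e1 : K x - K y = (1-α) • (x - y) + α • (N x - N y) := by
      have ex : K x = x + α • (N x - x) := by rw [← hKN x]; abel
      have ey : K y = y + α • (N y - y) := by rw [← hKN y]; abel
      rw [ex, ey, smul_sub α (N x) x, smul_sub α (N y) y, sub_smul, one_smul,
        smul_sub α x y, smul_sub α (N x) (N y)]
      abel
    have hb2 : ⟪p - q, K x - K y⟫ = (1-α)*⟪p - q, x - y⟫ + α*⟪p - q, N x - N y⟫ := by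
      rw [e1, inner_add_right, real_inner_smul_right, real_inner_smul_right]
    have hcs : ⟪p - q, N x - N y⟫ ≤ ‖p - q‖ * ‖x - y‖ :=
      le_trans (real_inner_le_norm _ _)
        (mul_le_mul_of_nonneg_left (hNle x y) (norm_nonneg _))
    have hsym : ⟪p - q, x - y⟫ = ⟪x - y, p - q⟫ := real_inner_comm _ _
    have hkey : ‖p - q‖^2 ≤ (1-α)*⟪x - y, p - q⟫ + α*(‖p - q‖ * ‖x - y‖) := by
      rw [hb2, hsym] at h0
      nlinarith [mul_le_mul_of_nonneg_left hcs hα0.le]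
    have e2 : (x + (2-α) • (p - x)) - (y + (2-α) • (q - y))
        = (x - y) + (2-α) • ((p - q) - (x - y)) := by
      rw [smul_sub ((2:ℝ)-α) (p - q) (x - y), smul_sub ((2:ℝ)-α) p x,
        smul_sub ((2:ℝ)-α) q y, smul_sub ((2:ℝ)-α) p q, smul_sub ((2:ℝ)-α) x y]
      abel
    rw [e2]
    have hv : ‖(x - y) + (2-α) • ((p - q) - (x - y))‖^2
        = ‖x - y‖^2 + 2*(2-α)*⟪x - y, (p - q) - (x - y)⟫
          + (2-α)^2*‖(p - q) - (x - y)‖^2 := by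
      rw [norm_add_sq_real, real_inner_smul_right, norm_smul, Real.norm_eq_abs,
        mul_pow, sq_abs]
      ring
    have hi : ⟪x - y, (p - q) - (x - y)⟫ = ⟪x - y, p - q⟫ - ‖x - y‖^2 := by
      rw [inner_sub_right, real_inner_self_eq_norm_sq]
    have hn2 : ‖(p - q) - (x - y)‖^2 = ‖p - q‖^2 - 2*⟪x - y, p - q⟫ + ‖x - y‖^2 := by
      rw [norm_sub_sq_real, real_inner_comm (p - q) (x - y)]
    have h2α : (0:ℝ) < 2 - α := by linarith
    have hsq : ‖(x - y) + (2-α) • ((p - q) - (x - y))‖^2 ≤ ‖x - y‖^2 := by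
      rw [hv, hi, hn2]
      nlinarith [mul_nonneg (mul_nonneg hα0.le h2α.le) (sq_nonneg (‖x - y‖ - ‖p - q‖)),
        mul_le_mul_of_nonneg_left hkey (by linarith : (0:ℝ) ≤ 2*(2-α))]
    exact (pow_le_pow_iff_left₀ (norm_nonneg _) (norm_nonneg _) (by norm_num)).mp hsq
end

section
/- Let X be a real Hilbert space, let B : X → X be β-Lipschitzian with β > 0, let W : X → X be α-strongly monotone with α > 0, let ε ∈ (0, α), let γ ∈ (0, (α−ε)/β], and set K = W − γB. Then: (i) K is ε-strongly monotone, i.e., ⟪x−y, Kx−Ky⟫ ≥ ε‖x−y‖² for all x, y ∈ X; (ii) if in addition α = 1 and W = Id, then K is cocoercive with constant 1/(2−ε), i.e., (1/(2−ε))K is firmly nonexpansive. -/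
open RealInnerProductSpace

/-- Lemma 5.1: with `K = W − γB`, (i) `K` is `ε`-strongly monotone; (ii) if `α = 1`
and `W = Id`, then `K` is `1/(2−ε)`-cocoercive, i.e. `(1/(2−ε))K` is firmly
nonexpansive (equivalently `2·(1/(2−ε))·K − Id` is nonexpansive). -/
theorem stmt_19
    {X : Type*} [NormedAddCommGroup X] [InnerProductSpace ℝ X] [CompleteSpace X]
    (B W : X → X) (β α ε γ : ℝ) (hβ : 0 < β) (hα : 0 < α)
    (hBlip : ∀ x y, ‖B x - B y‖ ≤ β * ‖x - y‖)
    (hWsm : ∀ x y, α * ‖x - y‖ ^ 2 ≤ ⟪x - y, W x - W y⟫)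
    (hε : ε ∈ Set.Ioo (0:ℝ) α)
    (hγ : γ ∈ Set.Ioc (0:ℝ) ((α - ε) / β))
    (K : X → X) (hK : ∀ x, K x = W x - γ • B x) :
    -- (i) K is ε-strongly monotone
    (∀ x y, ε * ‖x - y‖ ^ 2 ≤ ⟪x - y, K x - K y⟫) ∧
    -- (ii) if α = 1 and W = Id, then (1/(2−ε))K is firmly nonexpansive,
    -- i.e. 2·(1/(2−ε))·K − Id is nonexpansive
    ((α = 1 ∧ W = fun x => x) →
      ∀ x y, ‖(2 * (1 / (2 - ε))) • (K x - K y) - (x - y)‖ ≤ ‖x - y‖) := by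
  obtain ⟨hε0, hεα⟩ := hε
  obtain ⟨hγ0, hγle⟩ := hγ
  have hγβ : γ * β ≤ α - ε := by
    rw [le_div_iff₀ hβ] at hγle; linarith
  have hKsub : ∀ x y, K x - K y = (W x - W y) - γ • (B x - B y) := by
    intro x y; rw [hK, hK, smul_sub]; abel
  constructor
  · intro x y
    rw [hKsub, inner_sub_right, real_inner_smul_right]
    have hB : ⟪x - y, B x - B y⟫ ≤ ‖x - y‖ * (β * ‖x - y‖) :=
      (real_inner_le_norm _ _).trans
        (mul_le_mul_of_nonneg_left (hBlip x y) (norm_nonneg _))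
    nlinarith [hWsm x y, sq_nonneg ‖x - y‖, norm_nonneg (x - y)]
  · rintro ⟨hα1, hWid⟩ x y
    subst hα1; subst hWid
    set u := x - y with hu
    set d := B x - B y with hd
    have hv : K x - K y = u - γ • d := by rw [hKsub]
    rw [hv]
    have hc : (0:ℝ) < 2 - ε := by linarith
    set c : ℝ := 2 * (1 / (2 - ε)) with hcdef
    have hcpos : 0 < c := by positivity
    have hq : ‖d‖ ≤ β * ‖u‖ := hBlip x y
    have hp : -(‖u‖ * ‖d‖) ≤ ⟪u, d⟫ := neg_le_of_abs_le (abs_real_inner_le_norm u d)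
    have hγd : γ * ‖d‖ ≤ (1 - ε) * ‖u‖ := by
      calc γ * ‖d‖ ≤ γ * (β * ‖u‖) :=
            mul_le_mul_of_nonneg_left hq hγ0.le
        _ = (γ * β) * ‖u‖ := by ring
        _ ≤ (1 - ε) * ‖u‖ :=
            mul_le_mul_of_nonneg_right (by linarith) (norm_nonneg _)
    have hsq : ‖c • (u - γ • d) - u‖ ^ 2 ≤ ‖u‖ ^ 2 := by
      have e1 : ‖c • (u - γ • d) - u‖ ^ 2 =
          ‖c • (u - γ • d)‖ ^ 2 - 2 * ⟪c • (u - γ • d), u⟫ + ‖u‖ ^ 2 :=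
        norm_sub_sq_real _ _
      have e2 : ‖c • (u - γ • d)‖ ^ 2 = c ^ 2 * ‖u - γ • d‖ ^ 2 := by
        rw [norm_smul, Real.norm_eq_abs, abs_of_pos hcpos, mul_pow]
      have e3 : ‖u - γ • d‖ ^ 2 = ‖u‖ ^ 2 - 2 * (γ * ⟪u, d⟫) + γ ^ 2 * ‖d‖ ^ 2 := by
        rw [norm_sub_sq_real, real_inner_smul_right, norm_smul, Real.norm_eq_abs,
          abs_of_pos hγ0, mul_pow]
      have e4 : ⟪c • (u - γ • d), u⟫ = c * (‖u‖ ^ 2 - γ * ⟪u, d⟫) := by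
        rw [real_inner_smul_left, inner_sub_left, real_inner_smul_left,
          real_inner_comm d u, real_inner_self_eq_norm_sq]
      rw [e1, e2, e3, e4]
      have key : 0 ≤ (1 - ε) * ‖u‖ ^ 2 + ε * (γ * ⟪u, d⟫) - γ ^ 2 * ‖d‖ ^ 2 := by
        nlinarith [mul_le_mul_of_nonneg_right hγd (norm_nonneg u),
          mul_le_mul hγd hγd (mul_nonneg hγ0.le (norm_nonneg _)) (mul_nonneg (by linarith) (norm_nonneg _)),
          mul_le_mul_of_nonneg_left hp (mul_nonneg hε0.le hγ0.le)]
      have main : c * (‖u‖ ^ 2 - 2 * (γ * ⟪u, d⟫) + γ ^ 2 * ‖d‖ ^ 2)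
          ≤ 2 * (‖u‖ ^ 2 - γ * ⟪u, d⟫) := by
        have h2 : 2 * (‖u‖ ^ 2 - 2 * (γ * ⟪u, d⟫) + γ ^ 2 * ‖d‖ ^ 2)
            ≤ (2 * (‖u‖ ^ 2 - γ * ⟪u, d⟫)) * (2 - ε) := by nlinarith [key]
        calc c * (‖u‖ ^ 2 - 2 * (γ * ⟪u, d⟫) + γ ^ 2 * ‖d‖ ^ 2)
            = 2 * (‖u‖ ^ 2 - 2 * (γ * ⟪u, d⟫) + γ ^ 2 * ‖d‖ ^ 2) / (2 - ε) := by
              rw [hcdef]; ring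
          _ ≤ 2 * (‖u‖ ^ 2 - γ * ⟪u, d⟫) := by rw [div_le_iff₀ hc]; linarith
      have final := mul_le_mul_of_nonneg_left main hcpos.le
      ring_nf at final ⊢
      linarith
    nlinarith [hsq, norm_nonneg (c • (u - γ • d) - u), norm_nonneg u]
end
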